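/- Let u = (u₁,…,u_d) and w = (w₁,…,w_d) be block vectors in ℂ^{dn} with blocks u_j, w_j ∈ ℂ^n. If ‖u_i‖₂ = ‖w_i‖₂ = 1 for some index i, then sin∠(u_i, w_i) ≤ min{‖u‖₂, ‖w‖₂} · sin∠(u, w). -/

import Mathlib

open scoped BigOperators

/-- Euclidean norm of a finite complex vector. -/
noncomputable def cenorm {ι : Type*} [Fintype ι] (v : ι → ℂ) : ℝ :=
  Real.sqrt (∑ i, ‖v i‖ ^ 2)

/-- Standard Hermitian inner product `w* u` (conjugate-linear in `w`). -/
noncomputable def cinner {ι : Type*} [Fintype ι] (w v : ι → ℂ) : ℂ :=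
  ∑ i, (starRingEnd ℂ) (w i) * v i

/-- Sine of the acute angle between two vectors. -/
noncomputable def sinAngle {ι : Type*} [Fintype ι] (u w : ι → ℂ) : ℝ :=
  Real.sqrt (1 - ‖cinner w u‖ ^ 2 / (cenorm u ^ 2 * cenorm w ^ 2))

lemma key' (t c U W : ℝ) (hU : 1 ≤ U) (hW : 1 ≤ W) (ht0 : 0 ≤ t) (ht1 : t ≤ 1)
    (hc0 : 0 ≤ c) (hc : c ≤ t + Real.sqrt (U^2-1) * Real.sqrt (W^2-1)) :
    Real.sqrt (1 - t^2) ≤ U * Real.sqrt (1 - c^2/(U^2*W^2)) := by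
  set A := Real.sqrt (U^2-1) with hA
  set B := Real.sqrt (W^2-1) with hB
  have hA0 : 0 ≤ A := Real.sqrt_nonneg _
  have hB0 : 0 ≤ B := Real.sqrt_nonneg _
  have hA2 : A^2 = U^2 - 1 := Real.sq_sqrt (by nlinarith)
  have hB2 : B^2 = W^2 - 1 := Real.sq_sqrt (by nlinarith)
  have hW0 : (0:ℝ) < W := by linarith
  have hU0 : (0:ℝ) < U := by linarith
  have hUW0 : (0:ℝ) < U^2 * W^2 := by positivity
  have hmain : c^2 ≤ W^2 * (U^2 - 1 + t^2) := by
    nlinarith [sq_nonneg (A - t*B), mul_self_le_mul_self hc0 hc]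
  have hx : 0 ≤ 1 - c^2/(U^2*W^2) := by
    rw [sub_nonneg, div_le_one hUW0]
    have ht2 : t^2 ≤ 1 := by nlinarith
    nlinarith [sq_nonneg W, hmain, ht2]
  have : U * Real.sqrt (1 - c^2/(U^2*W^2)) = Real.sqrt (U^2 * (1 - c^2/(U^2*W^2))) := by
    rw [Real.sqrt_mul (by positivity), Real.sqrt_sq hU0.le]
  rw [this]
  apply Real.sqrt_le_sqrt
  have heq : U^2 * (1 - c^2/(U^2*W^2)) = U^2 - c^2 / W^2 := by
    field_simp
  have hdiv : c^2 / W^2 ≤ U^2 - 1 + t^2 := (div_le_iff₀ (by positivity)).2 (by nlinarith)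
  rw [heq]; linarith

lemma key (t c U W : ℝ) (hU : 1 ≤ U) (hW : 1 ≤ W) (ht0 : 0 ≤ t) (ht1 : t ≤ 1)
    (hc0 : 0 ≤ c) (hc : c ≤ t + Real.sqrt (U^2-1) * Real.sqrt (W^2-1)) :
    Real.sqrt (1 - t^2) ≤ min U W * Real.sqrt (1 - c^2/(U^2*W^2)) := by
  rcases le_total U W with h | h
  · rw [min_eq_left h]; exact key' t c U W hU hW ht0 ht1 hc0 hc
  · rw [min_eq_right h, mul_comm (U^2)]
    exact key' t c W U hW hU ht0 ht1 hc0 (by rw [mul_comm] at hc; exact hc)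

lemma cinner_abs_le {ι : Type*} [Fintype ι] (w v : ι → ℂ) :
    ‖cinner w v‖ ≤ cenorm v * cenorm w := by
  have h := norm_inner_le_norm (𝕜 := ℂ) (E := EuclideanSpace ℂ ι)
    (WithLp.toLp 2 w) (WithLp.toLp 2 v)
  simp only [EuclideanSpace.norm_eq, PiLp.inner_apply, RCLike.inner_apply,
    PiLp.toLp_apply] at h
  rw [cinner, cenorm, cenorm, mul_comm]
  simpa only [mul_comm] using h

lemma cenorm_block_sq {d n : ℕ} (v : Fin d → Fin n → ℂ) :
    cenorm (fun p : Fin d × Fin n => v p.1 p.2) ^ 2 = ∑ j, cenorm (v j) ^ 2 := by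
  rw [cenorm, Real.sq_sqrt (by positivity), Fintype.sum_prod_type]
  exact Finset.sum_congr rfl fun j _ => (Real.sq_sqrt (by positivity)).symm

/-- For block vectors `u, w ∈ ℂ^{dn}` with `‖u_i‖ = ‖w_i‖ = 1`,
`sin∠(u_i, w_i) ≤ min{‖u‖, ‖w‖} · sin∠(u, w)`. -/
theorem stmt2 {d n : ℕ} (u w : Fin d → Fin n → ℂ) (i : Fin d)
    (hui : cenorm (u i) = 1) (hwi : cenorm (w i) = 1) :
    sinAngle (u i) (w i) ≤
      min (cenorm fun p : Fin d × Fin n => u p.1 p.2)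
          (cenorm fun p : Fin d × Fin n => w p.1 p.2) *
        sinAngle (fun p : Fin d × Fin n => u p.1 p.2)
          (fun p : Fin d × Fin n => w p.1 p.2) := by
  classical
  set U := cenorm (fun p : Fin d × Fin n => u p.1 p.2) with hUdef
  set W := cenorm (fun p : Fin d × Fin n => w p.1 p.2) with hWdef
  set t := ‖cinner (w i) (u i)‖ with htdef
  set c := ‖
    (cinner (fun p : Fin d × Fin n => w p.1 p.2) (fun p : Fin d × Fin n => u p.1 p.2))‖ with hcdef
  have hU0 : 0 ≤ U := Real.sqrt_nonneg _
  have hW0 : 0 ≤ W := Real.sqrt_nonneg _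
  have hUsq : U ^ 2 = ∑ j, cenorm (u j) ^ 2 := cenorm_block_sq u
  have hWsq : W ^ 2 = ∑ j, cenorm (w j) ^ 2 := cenorm_block_sq w
  have hU1 : 1 ≤ U := by
    have h1 : cenorm (u i) ^ 2 ≤ U ^ 2 := by
      rw [hUsq]
      exact Finset.single_le_sum (f := fun j => cenorm (u j) ^ 2)
        (fun j _ => by positivity) (Finset.mem_univ i)
    rw [hui] at h1; nlinarith
  have hW1 : 1 ≤ W := by
    have h1 : cenorm (w i) ^ 2 ≤ W ^ 2 := by
      rw [hWsq]
      exact Finset.single_le_sum (f := fun j => cenorm (w j) ^ 2)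
        (fun j _ => by positivity) (Finset.mem_univ i)
    rw [hwi] at h1; nlinarith
  have ht0 : 0 ≤ t := norm_nonneg _
  have hc0 : 0 ≤ c := norm_nonneg _
  have ht1 : t ≤ 1 := by
    have := cinner_abs_le (w i) (u i)
    rw [hui, hwi] at this; simpa using this
  have hc : c ≤ t + Real.sqrt (U^2-1) * Real.sqrt (W^2-1) := by
    have hsplit : cinner (fun p : Fin d × Fin n => w p.1 p.2)
        (fun p : Fin d × Fin n => u p.1 p.2) = ∑ j, cinner (w j) (u j) := by
      rw [cinner, Fintype.sum_prod_type]; rfl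
    have hdecomp : (∑ j, cinner (w j) (u j)) =
        cinner (w i) (u i) + ∑ j ∈ Finset.univ.erase i, cinner (w j) (u j) :=
      (Finset.add_sum_erase _ _ (Finset.mem_univ i)).symm
    have hsumu : ∑ j ∈ Finset.univ.erase i, cenorm (u j) ^ 2 = U ^ 2 - 1 := by
      rw [Finset.sum_erase_eq_sub (Finset.mem_univ i), ← hUsq, hui]; norm_num
    have hsumw : ∑ j ∈ Finset.univ.erase i, cenorm (w j) ^ 2 = W ^ 2 - 1 := by
      rw [Finset.sum_erase_eq_sub (Finset.mem_univ i), ← hWsq, hwi]; norm_num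
    calc c = ‖cinner (w i) (u i) +
              ∑ j ∈ Finset.univ.erase i, cinner (w j) (u j)‖ := by
            rw [hcdef, hsplit, hdecomp]
      _ ≤ t + ‖∑ j ∈ Finset.univ.erase i, cinner (w j) (u j)‖ :=
            norm_add_le _ _
      _ ≤ t + ∑ j ∈ Finset.univ.erase i, ‖cinner (w j) (u j)‖ := by
            gcongr
            exact norm_sum_le _ _
      _ ≤ t + ∑ j ∈ Finset.univ.erase i, cenorm (u j) * cenorm (w j) := by
            gcongr with j hj
            exact cinner_abs_le (w j) (u j)
      _ ≤ t + Real.sqrt (U^2-1) * Real.sqrt (W^2-1) := by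
            gcongr
            rw [← hsumu, ← hsumw]
            exact Real.sum_mul_le_sqrt_mul_sqrt _ _ _
  have hL : sinAngle (u i) (w i) = Real.sqrt (1 - t^2) := by
    rw [sinAngle, hui, hwi]; norm_num; rfl
  have hR : sinAngle (fun p : Fin d × Fin n => u p.1 p.2)
      (fun p : Fin d × Fin n => w p.1 p.2) = Real.sqrt (1 - c^2/(U^2*W^2)) := by
    rw [sinAngle]
  rw [hL, hR]
  exact key t c U W hU1 hW1 ht0 ht1 hc0 hc
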